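/- arXiv:1306.5317 — 3 statements merged into one kernel-verified Lean document; each statement's English description precedes it below -/
import Mathlib

section
/- Let G be a Lie group with Lie algebra 𝔤 and let π : G → B(Y)ˣ be a uniformly bounded representation on a Banach space Y. Let X₁, …, X_m be a basis of 𝔤 and γ_{X_j}(t) := exp_G(t X_j). Then a functional ξ ∈ Y* has norm-continuous orbit map g ↦ π*(g)ξ on G if and only if for each j ∈ {1,…,m} the map t ↦ π*(γ_{X_j}(t))ξ is norm-continuous from ℝ to Y*. (That is, Y_{π*₀} = ⋂_{j=1}^m Y_{π*∘γ_{X_j}}.) -/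
open NormedSpace Filter Topology

/-- The Banach-space adjoint (transpose) of a bounded operator, acting on the dual. -/
noncomputable def contraDual {Y : Type*} [NormedAddCommGroup Y] [NormedSpace ℂ Y]
    (T : Y →L[ℂ] Y) : StrongDual ℂ Y →L[ℂ] StrongDual ℂ Y :=
  (ContinuousLinearMap.compL ℂ Y Y ℂ).flip T

/-- let `G` be a Lie group, presented through one-parameter subgroups
`γ_j (t) = exp_G (t X_j)` associated with a basis `X₁, …, X_m` of its Lie algebra, so that
`(t₁, …, t_m) ↦ γ₁ (t₁) ⋯ γ_m (t_m)` is a local diffeomorphism at `0` (in particular the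
image of any neighborhood of `0 ∈ ℝ^m` is a neighborhood of `1 ∈ G`, which is the hypothesis
`hloc`).  If `π` is a uniformly bounded representation of `G` on a Banach space `Y`, then a
functional `ξ ∈ Y*` has norm-continuous orbit map `g ↦ π* (g) ξ` on `G` if and only if for
each `j` the map `t ↦ π* (γ_j (t)) ξ` is norm-continuous on `ℝ`. -/
theorem stmt5 {Y : Type*} [NormedAddCommGroup Y] [NormedSpace ℂ Y] [CompleteSpace Y]
    {G : Type*} [Group G] [TopologicalSpace G] [IsTopologicalGroup G]
    (π : G →* (Y →L[ℂ] Y)ˣ) {M : ℝ} (hM : ∀ g : G, ‖(π g : Y →L[ℂ] Y)‖ ≤ M)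
    {m : ℕ} (γ : Fin m → ℝ → G)
    (hγ0 : ∀ j, γ j 0 = 1) (hγadd : ∀ j s t, γ j (s + t) = γ j s * γ j t)
    (hγcont : ∀ j, Continuous (γ j))
    (hloc : nhds (1 : G) ≤
      Filter.map (fun t : Fin m → ℝ => (List.ofFn fun j => γ j (t j)).prod)
        (nhds (0 : Fin m → ℝ)))
    (ξ : StrongDual ℂ Y) :
    (Continuous fun g => contraDual (π g⁻¹ : Y →L[ℂ] Y) ξ) ↔
      ∀ j, Continuous fun t : ℝ => contraDual (π (γ j t)⁻¹ : Y →L[ℂ] Y) ξ := by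
  have hcd : ∀ (T : Y →L[ℂ] Y) (η : StrongDual ℂ Y), contraDual T η = η.comp T := fun _ _ => rfl
  set φ : G → StrongDual ℂ Y := fun g => contraDual (π g⁻¹ : Y →L[ℂ] Y) ξ with hφdef
  have hM0 : 0 ≤ M := le_trans (norm_nonneg _) (hM 1)
  have hφ1 : φ 1 = ξ := by
    simp only [hφdef, hcd, inv_one, map_one, Units.val_one, ContinuousLinearMap.one_def, ContinuousLinearMap.comp_id]
  have hmul : ∀ g h : G, φ (g * h) = contraDual (π g⁻¹ : Y →L[ℂ] Y) (φ h) := by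
    intro g h
    simp only [hφdef, hcd]
    rw [ContinuousLinearMap.comp_assoc]
    congr 1
    rw [mul_inv_rev, map_mul]
    rfl
  have hnorm : ∀ (g : G) (η : StrongDual ℂ Y),
      ‖contraDual (π g : Y →L[ℂ] Y) η‖ ≤ M * ‖η‖ := by
    intro g η
    rw [hcd]
    calc ‖η.comp (π g : Y →L[ℂ] Y)‖ ≤ ‖η‖ * ‖(π g : Y →L[ℂ] Y)‖ :=
          ContinuousLinearMap.opNorm_comp_le _ _
      _ ≤ ‖η‖ * M := mul_le_mul_of_nonneg_left (hM g) (norm_nonneg _)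
      _ = M * ‖η‖ := mul_comm _ _
  constructor
  · intro h j
    exact h.comp (hγcont j)
  · intro hj
    -- key: product of two tends
    have key : ∀ (h k : (Fin m → ℝ) → G),
        Tendsto (fun a => φ (h a)) (𝓝 0) (𝓝 ξ) → Tendsto (fun a => φ (k a)) (𝓝 0) (𝓝 ξ) →
        Tendsto (fun a => φ (h a * k a)) (𝓝 0) (𝓝 ξ) := by
      intro h k hh hk
      have hdiff : Tendsto (fun a => contraDual (π (h a)⁻¹ : Y →L[ℂ] Y) (φ (k a) - ξ))
          (𝓝 0) (𝓝 0) := by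
        rw [tendsto_zero_iff_norm_tendsto_zero]
        have hk0 : Tendsto (fun a => ‖φ (k a) - ξ‖) (𝓝 0) (𝓝 0) := by
          rw [← tendsto_zero_iff_norm_tendsto_zero]
          simpa using hk.sub (tendsto_const_nhds (x := ξ))
        have : Tendsto (fun a => M * ‖φ (k a) - ξ‖) (𝓝 0) (𝓝 (M * 0)) := hk0.const_mul M
        rw [mul_zero] at this
        exact squeeze_zero (fun a => norm_nonneg _) (fun a => hnorm _ _) this
      have : Tendsto (fun a => contraDual (π (h a)⁻¹ : Y →L[ℂ] Y) (φ (k a) - ξ) + φ (h a))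
          (𝓝 0) (𝓝 (0 + ξ)) := hdiff.add hh
      rw [zero_add] at this
      refine this.congr fun a => ?_
      rw [hmul, map_sub]
      have : contraDual (π (h a)⁻¹ : Y →L[ℂ] Y) ξ = φ (h a) := rfl
      rw [this]
      abel
    have hlist : ∀ (L : List (Fin m)),
        Tendsto (fun t : Fin m → ℝ => φ ((L.map fun j => γ j (t j)).prod)) (𝓝 0) (𝓝 ξ) := by
      intro L
      induction L with
      | nil => simpa [hφ1] using tendsto_const_nhds (x := ξ) (f := (𝓝 (0 : Fin m → ℝ)))
      | cons j L ih =>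
        have hh : Tendsto (fun t : Fin m → ℝ => φ (γ j (t j))) (𝓝 0) (𝓝 ξ) := by
          have h1 : Tendsto (fun t : Fin m → ℝ => t j) (𝓝 0) (𝓝 0) :=
            (continuous_apply j).tendsto 0
          have h2 : Tendsto (fun s : ℝ => φ (γ j s)) (𝓝 0) (𝓝 ξ) := by
            have := (hj j).tendsto 0
            simpa [hφdef, hγ0 j, hφ1, hcd, ContinuousLinearMap.one_def, ContinuousLinearMap.comp_id] using this
          exact h2.comp h1
        simpa using key _ _ hh ih
    have hone : Tendsto φ (𝓝 1) (𝓝 ξ) := by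
      have hF := hlist (List.finRange m)
      rw [show (fun t : Fin m → ℝ => φ (((List.finRange m).map fun j => γ j (t j)).prod)) =
          fun t : Fin m → ℝ => φ ((List.ofFn fun j => γ j (t j)).prod) by
        funext t; rw [List.ofFn_eq_map]] at hF
      calc Filter.map φ (𝓝 (1 : G)) ≤ Filter.map φ
            (Filter.map (fun t : Fin m → ℝ => (List.ofFn fun j => γ j (t j)).prod) (𝓝 0)) :=
          map_mono hloc
        _ ≤ 𝓝 ξ := by rw [Filter.map_map]; exact hF
    rw [continuous_iff_continuousAt]
    intro g₀
    have htr : Tendsto (fun g : G => g₀⁻¹ * g) (𝓝 g₀) (𝓝 1) := by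
      have := (Homeomorph.mulLeft g₀⁻¹).continuous.tendsto g₀
      simpa using this
    have hL := ((contraDual (π g₀⁻¹ : Y →L[ℂ] Y)).continuous.tendsto ξ).comp
      (hone.comp htr)
    have heq : (fun g : G => contraDual (π g₀⁻¹ : Y →L[ℂ] Y) (φ (g₀⁻¹ * g))) = φ := by
      funext g
      rw [← hmul, mul_inv_cancel_left]
    unfold ContinuousAt
    have : φ g₀ = contraDual (π g₀⁻¹ : Y →L[ℂ] Y) ξ := rfl
    rw [this, ← heq]
    exact hL
end

section
/- There exists a bounded function φ ∈ L^∞(ℝ) that is globally Lipschitz on ℝ but whose derivative does not exist everywhere as a bounded uniformly continuous function; consequently, for the translation group ρ(t)f = f(·+t) on L²(ℝ) and the induced representation π(t)A = ρ(t)Aρ(t)⁻¹ on trace-class operators, the multiplication operator φ(Q) lies in C¹(π*) but the map t ↦ π*(t)φ(Q) is not of class C¹ from ℝ to B(L²(ℝ)). -/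
set_option maxHeartbeats 1000000

open MeasureTheory Filter Set Topology Asymptotics

noncomputable section Stmt7Aux

/-- the counterexample function -/
private def phi7 : ℝ → ℂ := fun x => ((min |x| 1 : ℝ) : ℂ)

private lemma phi7_lip : LipschitzWith 1 phi7 := by
  have h1 : LipschitzWith 1 (fun x : ℝ => min |x| 1) := by
    have := (lipschitzWith_one_norm (E := ℝ)).min (LipschitzWith.const' (α := ℝ) (1 : ℝ) (K := 1))
    simpa [Real.norm_eq_abs] using this
  exact (by simpa using Complex.isometry_ofReal.lipschitz.comp h1 : LipschitzWith 1 (Complex.ofReal ∘ fun x : ℝ => min |x| 1))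

private lemma phi7_not_deriv : ¬ ∃ c : ℂ, HasDerivAt phi7 c 0 := by
  rintro ⟨c, hc⟩
  rw [hasDerivAt_iff_tendsto_slope] at hc
  have h1 : Tendsto (slope phi7 0) (𝓝[>] (0:ℝ)) (𝓝 c) :=
    hc.mono_left (nhdsWithin_mono _ (fun x hx => ne_of_gt hx))
  have h2 : Tendsto (slope phi7 0) (𝓝[<] (0:ℝ)) (𝓝 c) :=
    hc.mono_left (nhdsWithin_mono _ (fun x hx => ne_of_lt hx))
  have e1 : ∀ᶠ t in 𝓝[>] (0:ℝ), slope phi7 0 t = 1 := by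
    filter_upwards [Ioo_mem_nhdsGT_of_mem (α := ℝ) ⟨le_refl 0, zero_lt_one⟩] with t ht
    have ht0 : (0:ℝ) < t := ht.1
    have hpt : phi7 t = (t : ℂ) := by
      simp [phi7, abs_of_pos ht0, min_eq_left ht.2.le]
    have hp0 : phi7 0 = 0 := by simp [phi7]
    rw [slope, hpt, hp0, sub_zero, vsub_eq_sub, sub_zero, Complex.real_smul]
    rw [← Complex.ofReal_mul, inv_mul_cancel₀ (ne_of_gt ht0), Complex.ofReal_one]
  have e2 : ∀ᶠ t in 𝓝[<] (0:ℝ), slope phi7 0 t = -1 := by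
    filter_upwards [Ioo_mem_nhdsLT_of_mem (α := ℝ) ⟨neg_lt_zero.mpr zero_lt_one, le_refl 0⟩] with t ht
    have ht0 : t < (0:ℝ) := ht.2
    have hpt : phi7 t = -(t : ℂ) := by
      simp only [phi7, abs_of_neg ht0, min_eq_left (by linarith [ht.1] : -t ≤ 1)]
      push_cast; ring
    have hp0 : phi7 0 = 0 := by simp [phi7]
    rw [slope, hpt, hp0, sub_zero, vsub_eq_sub, sub_zero, Complex.real_smul]
    rw [mul_neg, ← Complex.ofReal_mul, inv_mul_cancel₀ (ne_of_lt ht0), Complex.ofReal_one]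
  have hc1 : c = 1 := tendsto_nhds_unique (h1.congr' e1) tendsto_const_nhds
  have hc2 : c = -1 := tendsto_nhds_unique (h2.congr' e2) tendsto_const_nhds
  rw [hc1] at hc2
  norm_num at hc2

/-- translation of an a.e. equality -/
private lemma shift_ae (t : ℝ) {g g' : ℝ → ℂ} (h : g =ᵐ[volume] g') :
    (fun x => g (x + t)) =ᵐ[volume] (fun x => g' (x + t)) :=
  (measurePreserving_add_right volume t).quasiMeasurePreserving.ae_eq_comp h

/-- upper bound for an operator that acts a.e. as multiplication -/
private lemma norm_le_mul7 (u f : Lp ℂ 2 (volume : Measure ℝ)) {c : ℝ → ℂ} {M : ℝ}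
    (hc : ∀ x, ‖c x‖ ≤ M)
    (h : (u : ℝ → ℂ) =ᵐ[volume] fun x => c x * f x) : ‖u‖ ≤ M * ‖f‖ := by
  have hM : 0 ≤ M := le_trans (norm_nonneg _) (hc 0)
  rw [Lp.norm_def, Lp.norm_def, eLpNorm_congr_ae h]
  have hle : eLpNorm (fun x => c x * f x) 2 volume
      ≤ eLpNorm ((M : ℂ) • (f : ℝ → ℂ)) 2 volume := by
    apply eLpNorm_mono_ae
    filter_upwards with x
    simp only [Pi.smul_apply, smul_eq_mul, norm_mul, Complex.norm_real, Real.norm_eq_abs,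
      abs_of_nonneg hM]
    exact mul_le_mul_of_nonneg_right (hc x) (norm_nonneg _)
  rw [eLpNorm_const_smul] at hle
  have := ENNReal.toReal_mono
    (ENNReal.mul_ne_top ENNReal.coe_ne_top (Lp.eLpNorm_ne_top f)) hle
  refine this.trans (le_of_eq ?_)
  simp only [ENNReal.toReal_mul, ENNReal.coe_toReal]
  congr 1
  simp [abs_of_nonneg hM]

private lemma phi7_second_diff {h x : ℝ} (h0 : 0 < h) (h2 : h ≤ 1/2)
    (hx : |x| ≤ h/2) : h ≤ ‖phi7 (x + h) + phi7 (x + -h) - 2 * phi7 x‖ := by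
  obtain ⟨hxl, hxr⟩ := abs_le.mp hx
  have e : phi7 (x + h) + phi7 (x + -h) - 2 * phi7 x
      = (((x + h) + (h - x) - 2 * |x| : ℝ) : ℂ) := by
    have a1 : |x + h| = x + h := abs_of_pos (by linarith)
    have a2 : |x + -h| = h - x := by
      rw [abs_of_neg (by linarith)]; ring
    have m1 : min |x + h| 1 = x + h := by rw [a1]; exact min_eq_left (by linarith)
    have m2 : min |x + -h| 1 = h - x := by rw [a2]; exact min_eq_left (by linarith)
    have m3 : min |x| 1 = |x| := min_eq_left (by linarith)
    simp only [phi7, m1, m2, m3]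
    push_cast; ring
  rw [e, Complex.norm_real, Real.norm_eq_abs]
  have : h ≤ (x + h) + (h - x) - 2 * |x| := by
    rcases abs_cases x with ⟨hc, _⟩ | ⟨hc, _⟩ <;> rw [hc] <;> linarith
  exact this.trans (le_abs_self _)

end Stmt7Aux

/-- there is a bounded globally Lipschitz `φ ∈ L^∞(ℝ)` whose derivative does not
exist everywhere as a bounded uniformly continuous function; consequently, for the translation
group `ρ (t) f = f (· + t)` on `L²(ℝ)` and the induced conjugation representation, the
multiplication operator `φ(Q)` lies in `C¹(π*)` (equivalently, its orbit map
`t ↦ π* (t) φ(Q) = ρ (t) φ(Q) ρ (t)⁻¹` is Lipschitz in operator norm, which expresses the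
boundedness of the commutator `[φ(Q), P]`), while this orbit map is not of class `C¹` from
`ℝ` to `B(L²(ℝ))`. -/
theorem stmt7 :
    ∃ φ : ℝ → ℂ,
      (∃ C : ℝ, ∀ x : ℝ, ‖φ x‖ ≤ C) ∧
      (∃ L : NNReal, LipschitzWith L φ) ∧
      ¬ (∃ ψ : ℝ → ℂ, (∃ C : ℝ, ∀ x : ℝ, ‖ψ x‖ ≤ C) ∧ UniformContinuous ψ ∧
          ∀ x : ℝ, HasDerivAt φ (ψ x) x) ∧
      ∀ (ρ : ℝ → (Lp ℂ 2 (volume : Measure ℝ)) →L[ℂ] Lp ℂ 2 (volume : Measure ℝ))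
        (Mφ : (Lp ℂ 2 (volume : Measure ℝ)) →L[ℂ] Lp ℂ 2 (volume : Measure ℝ)),
        (∀ (t : ℝ) (f : Lp ℂ 2 (volume : Measure ℝ)),
          (ρ t f : ℝ → ℂ) =ᵐ[volume] fun x => f (x + t)) →
        (∀ f : Lp ℂ 2 (volume : Measure ℝ),
          (Mφ f : ℝ → ℂ) =ᵐ[volume] fun x => φ x * f x) →
        (∃ L' : NNReal, LipschitzWith L' fun t : ℝ => ρ t ∘L Mφ ∘L ρ (-t)) ∧
        ¬ ContDiff ℝ 1 fun t : ℝ => ρ t ∘L Mφ ∘L ρ (-t) := by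
  refine ⟨phi7, ⟨1, fun x => ?_⟩, ⟨1, phi7_lip⟩, ?_, ?_⟩
  · simp only [phi7, Complex.norm_real, Real.norm_eq_abs]
    rw [abs_of_nonneg (le_min (abs_nonneg x) zero_le_one)]
    exact min_le_right _ _
  · rintro ⟨ψ, -, -, hψ⟩
    exact phi7_not_deriv ⟨ψ 0, hψ 0⟩
  intro ρ Mφ hρ hMφ
  set F : ℝ → (Lp ℂ 2 (volume : Measure ℝ)) →L[ℂ] Lp ℂ 2 (volume : Measure ℝ) :=
    fun t : ℝ => ρ t ∘L Mφ ∘L ρ (-t) with hF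
  -- the conjugation acts a.e. as multiplication by the translated function
  have key : ∀ (t : ℝ) (f : Lp ℂ 2 (volume : Measure ℝ)),
      (F t f : ℝ → ℂ) =ᵐ[volume] fun x => phi7 (x + t) * f x := by
    intro t f
    have h1 : ((F t f : Lp ℂ 2 (volume : Measure ℝ)) : ℝ → ℂ)
        =ᵐ[volume] fun x => (Mφ (ρ (-t) f)) (x + t) := hρ t (Mφ (ρ (-t) f))
    have h2 : ((Mφ (ρ (-t) f) : Lp ℂ 2 (volume : Measure ℝ)) : ℝ → ℂ)
        =ᵐ[volume] fun y => phi7 y * (ρ (-t) f) y := hMφ (ρ (-t) f)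
    have h3 : ((ρ (-t) f : Lp ℂ 2 (volume : Measure ℝ)) : ℝ → ℂ)
        =ᵐ[volume] fun y => f (y + -t) := hρ (-t) f
    refine h1.trans ((shift_ae t h2).trans ?_)
    filter_upwards [shift_ae t h3] with x hx
    have hx' : ((ρ (-t) f : Lp ℂ 2 (volume : Measure ℝ)) : ℝ → ℂ) (x + t)
        = (f : ℝ → ℂ) (x + t + -t) := hx
    show phi7 (x + t) * ((ρ (-t) f : Lp ℂ 2 (volume : Measure ℝ)) : ℝ → ℂ) (x + t)
        = phi7 (x + t) * (f : ℝ → ℂ) x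
    rw [hx', show x + t + -t = x by ring]
  constructor
  · -- Lipschitz with constant 1
    refine ⟨1, ?_⟩
    rw [lipschitzWith_iff_dist_le_mul]
    intro t s
    rw [dist_eq_norm, NNReal.coe_one, one_mul]
    refine ContinuousLinearMap.opNorm_le_bound _ dist_nonneg fun f => ?_
    have hco : (((F t - F s) f : Lp ℂ 2 (volume : Measure ℝ)) : ℝ → ℂ)
        =ᵐ[volume] fun x => (phi7 (x + t) - phi7 (x + s)) * f x := by
      have : (F t - F s) f = F t f - F s f := rfl
      rw [this]
      filter_upwards [Lp.coeFn_sub (F t f) (F s f), key t f, key s f] with x e0 e1 e2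
      rw [e0, Pi.sub_apply, e1, e2]; ring
    refine norm_le_mul7 _ f (fun x => ?_) hco
    have := phi7_lip.dist_le_mul (x + t) (x + s)
    simp only [NNReal.coe_one, one_mul, dist_eq_norm] at this ⊢
    refine this.trans (le_of_eq ?_)
    rw [Real.norm_eq_abs, Real.norm_eq_abs]
    congr 1; ring
  · -- not C¹
    intro hC
    have hd : HasFDerivAt F (fderiv ℝ F 0) 0 := (hC.differentiable one_ne_zero 0).hasFDerivAt
    set A := fderiv ℝ F 0 with hA
    have ho : (fun h : ℝ => F h - F 0 - A h) =o[𝓝 0] fun h : ℝ => h := by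
      have := hasFDerivAt_iff_isLittleO_nhds_zero.mp hd
      simpa using this
    have hneg : Tendsto (fun h : ℝ => -h) (𝓝 0) (𝓝 (0 : ℝ)) := by
      simpa using (continuous_neg.tendsto (0 : ℝ))
    have ho2 : (fun h : ℝ => F (-h) - F 0 - A (-h)) =o[𝓝 0] fun h : ℝ => h := by
      have := (ho.comp_tendsto hneg).trans_isBigO
        (isBigO_of_le (𝓝 (0:ℝ)) (fun h => by simp : ∀ h : ℝ, ‖-h‖ ≤ ‖h‖))
      exact this
    have hD : (fun h : ℝ => F h + F (-h) - (2:ℝ) • F 0) =o[𝓝 0] fun h : ℝ => h := by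
      refine (ho.add ho2).congr' (Eventually.of_forall fun h => ?_) EventuallyEq.rfl
      show F h - F 0 - A h + (F (-h) - F 0 - A (-h)) = F h + F (-h) - (2:ℝ) • F 0
      rw [map_neg, two_smul]
      abel
    have hev : ∀ᶠ h in 𝓝[>] (0:ℝ),
        ‖F h + F (-h) - (2:ℝ) • F 0‖ ≤ 1/2 * ‖h‖ ∧ h ∈ Ioo (0:ℝ) (1/2) :=
      ((hD.def (by norm_num : (0:ℝ) < 1/2)).filter_mono nhdsWithin_le_nhds).and
        (Ioo_mem_nhdsGT_of_mem ⟨le_refl 0, by norm_num⟩)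
    obtain ⟨h, hle, hh⟩ := hev.exists
    have h0 : 0 < h := hh.1
    have h12 : h ≤ 1/2 := hh.2.le
    set D := F h + F (-h) - (2:ℝ) • F 0 with hDdef
    -- the test function
    set S : Set ℝ := Icc (-(h/2)) (h/2) with hSdef
    have hS : MeasurableSet S := measurableSet_Icc
    have hμS : volume S = ENNReal.ofReal h := by
      rw [hSdef, Real.volume_Icc]; congr 1; ring
    have hμS' : volume S ≠ ⊤ := by rw [hμS]; exact ENNReal.ofReal_ne_top
    set f0 : Lp ℂ 2 (volume : Measure ℝ) := indicatorConstLp 2 hS hμS' (1 : ℂ) with hf0def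
    have hf0norm : ‖f0‖ = h ^ ((1:ℝ)/2) := by
      rw [hf0def, norm_indicatorConstLp (by norm_num) (by norm_num)]
      rw [measureReal_def, hμS, ENNReal.toReal_ofReal h0.le]
      norm_num
    -- coefficient function of D f0
    have hco : ((D f0 : Lp ℂ 2 (volume : Measure ℝ)) : ℝ → ℂ)
        =ᵐ[volume] fun x => (phi7 (x + h) + phi7 (x + -h) - 2 * phi7 x)
          * S.indicator (fun _ => (1:ℂ)) x := by
      have hsplit : D f0 = F h f0 + F (-h) f0 - (2:ℝ) • (F 0 f0) := rfl
      rw [hsplit]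
      filter_upwards [Lp.coeFn_sub (F h f0 + F (-h) f0) ((2:ℝ) • F 0 f0),
        Lp.coeFn_add (F h f0) (F (-h) f0), Lp.coeFn_smul (2:ℝ) (F 0 f0),
        key h f0, key (-h) f0, key 0 f0,
        indicatorConstLp_coeFn (p := 2) (hs := hS) (hμs := hμS') (c := (1:ℂ))] with
        x e0 e1 e2 e3 e4 e5 e6
      rw [e0, Pi.sub_apply, e1, Pi.add_apply, e2, Pi.smul_apply, e3, e4, e5, e6]
      simp only [add_zero, Complex.real_smul, Complex.ofReal_ofNat]
      ring
    -- lower bound on ‖D f0‖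
    have hlow : h * h ^ ((1:ℝ)/2) ≤ ‖D f0‖ := by
      rw [Lp.norm_def, eLpNorm_congr_ae hco]
      have hmono : eLpNorm (S.indicator fun _ => ((h:ℝ):ℂ)) 2 volume
          ≤ eLpNorm (fun x => (phi7 (x + h) + phi7 (x + -h) - 2 * phi7 x)
            * S.indicator (fun _ => (1:ℂ)) x) 2 volume := by
        apply eLpNorm_mono_ae
        filter_upwards with x
        by_cases hx : x ∈ S
        · have hx' : |x| ≤ h/2 := abs_le.mpr ⟨by simpa using hx.1, hx.2⟩
          simp only [Set.indicator_of_mem hx, mul_one, Complex.norm_real, Real.norm_eq_abs,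
            abs_of_pos h0]
          exact phi7_second_diff h0 h12 hx'
        · simp [Set.indicator_of_notMem hx]
      rw [eLpNorm_indicator_const hS (by norm_num) (by norm_num)] at hmono
      have := ENNReal.toReal_mono (by
        rw [← eLpNorm_congr_ae hco]
        exact Lp.eLpNorm_ne_top (D f0)) hmono
      refine le_trans (le_of_eq ?_) this
      rw [ENNReal.toReal_mul, hμS, ← ENNReal.toReal_rpow, ENNReal.toReal_ofReal h0.le]
      simp only [toReal_enorm, ENNReal.coe_toReal, coe_nnnorm, Complex.norm_real, Real.norm_eq_abs,
        abs_of_pos h0]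
      norm_num
    -- conclude
    have hup : ‖D f0‖ ≤ ‖D‖ * ‖f0‖ := D.le_opNorm f0
    have hpow : (0:ℝ) < h ^ ((1:ℝ)/2) := Real.rpow_pos_of_pos h0 _
    have hDn : h ≤ ‖D‖ := by
      rw [hf0norm] at hup
      nlinarith [hlow.trans hup]
    rw [Real.norm_eq_abs, abs_of_pos h0] at hle
    have := hDn.trans hle
    linarith
end

section
/- Let (T(t))_{t∈ℝ} be a strongly continuous one-parameter group of unitary operators on a Hilbert space H with self-adjoint generator A (so T(t) = e^{itA}), and let Y ∈ B(H). If the map t ↦ T(t)YT(t)⁻¹ is differentiable at t = 0 in the strong operator topology with derivative D ∈ B(H), then for every x in the domain of A one has Yx ∈ D(A) and i(AY − YA)x = Dx; conversely, if Y maps D(A) into D(A) and the commutator i(AY − YA) defined on D(A) extends to a bounded operator D, then t ↦ T(t)YT(t)⁻¹x is differentiable for every x ∈ H with derivative T(t)DT(t)⁻¹x. -/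
open Filter Asymptotics Topology

lemma auxProd {H : Type*} [NormedAddCommGroup H] [NormedSpace ℂ H]
    (F : ℝ → H →L[ℂ] H) (C : ℝ) (hC : ∀ s z, ‖F s z‖ ≤ C * ‖z‖)
    (g : ℝ → H) (v w : H) (hg : HasDerivAt g v 0)
    (hFg0 : HasDerivAt (fun s => F s (g 0)) w 0)
    (hFv : Filter.Tendsto (fun s => F s v) (𝓝 0) (𝓝 (F 0 v))) :
    HasDerivAt (fun s => F s (g s)) (w + F 0 v) 0 := by
  rw [hasDerivAt_iff_isLittleO] at hg hFg0 ⊢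
  simp only [sub_zero] at hg hFg0 ⊢
  have h2 : (fun s => F s (g s - g 0 - s • v)) =o[𝓝 0] fun s : ℝ => s :=
    (Asymptotics.IsBigO.of_bound C (Filter.Eventually.of_forall fun s => hC s _)).trans_isLittleO hg
  have h3 : (fun s : ℝ => s • (F s v - F 0 v)) =o[𝓝 0] fun s : ℝ => s := by
    rw [Asymptotics.isLittleO_iff]
    intro c hc
    have he : Filter.Tendsto (fun s => F s v - F 0 v) (𝓝 0) (𝓝 0) := by
      simpa using hFv.sub (tendsto_const_nhds (x := F 0 v))
    filter_upwards [(NormedAddCommGroup.tendsto_nhds_zero.mp he) c hc] with s hs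
    rw [norm_smul]
    calc ‖s‖ * ‖F s v - F 0 v‖ ≤ ‖s‖ * c := by gcongr
      _ = c * ‖s‖ := mul_comm _ _
  have heq : (fun s => F s (g s) - F 0 (g 0) - s • (w + F 0 v)) =
      fun s => (F s (g 0) - F 0 (g 0) - s • w) + F s (g s - g 0 - s • v)
        + s • (F s v - F 0 v) := by
    funext s
    have : F s (g s - g 0 - s • v) = F s (g s) - F s (g 0) - s • F s v := by
      simp [map_sub, (F s).map_smul_of_tower]
    rw [this, smul_add, smul_sub]
    abel
  rw [heq]
  exact (hFg0.add h2).add h3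

/-- let `T (t) = e^{i t A}` be the strongly continuous unitary one-parameter
group generated by a self-adjoint operator `A` on a Hilbert space `H` (so `x ∈ D(A)` iff
`t ↦ T (t) x` is differentiable at `0`, with derivative `i A x` there), and let
`Y ∈ B(H)`.  (1) If `t ↦ T (t) Y T (t)⁻¹` is differentiable at `t = 0` in the strong
operator topology with derivative `D ∈ B(H)`, then for every `x ∈ D(A)` one has
`Y x ∈ D(A)` and `i (A Y − Y A) x = D x`.  (2) Conversely, if `Y` maps `D(A)` into `D(A)`
and the commutator `i (A Y − Y A)` on `D(A)` extends to a bounded operator `D`, then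
`t ↦ T (t) Y T (t)⁻¹ x` is differentiable for every `x ∈ H`, with derivative
`T (t) D T (t)⁻¹ x`. -/
theorem stmt12 {H : Type*} [NormedAddCommGroup H] [InnerProductSpace ℂ H] [CompleteSpace H]
    (A : H →ₗ.[ℂ] H) (hA : IsSelfAdjoint A)
    (T : ℝ → H →L[ℂ] H) (hT0 : T 0 = 1)
    (hTadd : ∀ s t : ℝ, T (s + t) = (T s).comp (T t))
    (hTu : ∀ t : ℝ, T t ∈ unitary (H →L[ℂ] H))
    (hTcont : ∀ x : H, Continuous fun t => T t x)
    (hdom : ∀ x : H, (∃ y : H, HasDerivAt (fun t => T t x) y 0) ↔ x ∈ A.domain)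
    (hgen : ∀ x : A.domain, HasDerivAt (fun t => T t (x : H)) (Complex.I • A x) 0)
    (Y : H →L[ℂ] H) :
    (∀ D : H →L[ℂ] H,
      (∀ x : H, HasDerivAt (fun t => (T t ∘L Y ∘L T (-t)) x) (D x) 0) →
      ∀ x : A.domain, ∃ h : Y (x : H) ∈ A.domain,
        Complex.I • (A ⟨Y (x : H), h⟩ - Y (A x)) = D (x : H)) ∧
    (∀ (hY : ∀ x : A.domain, Y (x : H) ∈ A.domain) (D : H →L[ℂ] H),
      (∀ x : A.domain, D (x : H) = Complex.I • (A ⟨Y (x : H), hY x⟩ - Y (A x))) →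
      ∀ (x : H) (t : ℝ),
        HasDerivAt (fun s => (T s ∘L Y ∘L T (-s)) x) ((T t ∘L D ∘L T (-t)) x) t) := by
  have hnorm : ∀ (t : ℝ) (z : H), ‖T t z‖ = ‖z‖ := fun t z =>
    ContinuousLinearMap.norm_map_of_mem_unitary (hTu t) z
  have hcomp1 : ∀ t : ℝ, (T t).comp (T (-t)) = 1 := fun t => by
    rw [← hTadd, add_neg_cancel, hT0]
  have hcancel : ∀ (t : ℝ) (z : H), T t (T (-t) z) = z := fun t z => by
    rw [← ContinuousLinearMap.comp_apply, hcomp1, ContinuousLinearMap.one_apply]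
  have hcancel' : ∀ (t : ℝ) (z : H), T (-t) (T t z) = z := fun t z => by
    have := hcancel (-t) z; rwa [neg_neg] at this
  have hFbound : ∀ (s : ℝ) (z : H), ‖(T s ∘L Y ∘L T (-s)) z‖ ≤ ‖Y‖ * ‖z‖ := fun s z => by
    show ‖T s (Y (T (-s) z))‖ ≤ ‖Y‖ * ‖z‖
    rw [hnorm]
    calc ‖Y (T (-s) z)‖ ≤ ‖Y‖ * ‖T (-s) z‖ := Y.le_opNorm _
      _ = ‖Y‖ * ‖z‖ := by rw [hnorm]
  -- shifted generator
  have hgen_t : ∀ (x : A.domain) (t : ℝ),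
      HasDerivAt (fun s => T s (x : H)) (T t (Complex.I • A x)) t := by
    intro x t
    have hk : HasDerivAt (fun r : ℝ => T t (T r (x : H))) (T t (Complex.I • A x)) (t - t) := by
      rw [sub_self]
      exact (((T t).restrictScalars ℝ).hasFDerivAt.comp_hasDerivAt 0 (hgen x) : )
    have h1 := hk.comp_sub_const (x := t) (a := t)
    refine HasDerivAt.congr_of_eventuallyEq h1 (Filter.Eventually.of_forall fun s => ?_)
    show T s (x : H) = T t (T (s - t) (x : H))
    rw [← ContinuousLinearMap.comp_apply, ← hTadd]
    congr 2
    ring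
  -- invariance of the domain
  have hinv : ∀ (x : A.domain) (t : ℝ), ∃ h : T t (x : H) ∈ A.domain,
      Complex.I • A ⟨T t (x : H), h⟩ = T t (Complex.I • A x) := by
    intro x t
    have hk : HasDerivAt (fun r : ℝ => T r (x : H)) (T t (Complex.I • A x)) (0 + t) := by
      rw [zero_add]; exact hgen_t x t
    have h1 := hk.comp_add_const (x := 0) (a := t)
    have h2 : HasDerivAt (fun s : ℝ => T s (T t (x : H))) (T t (Complex.I • A x)) 0 := by
      refine HasDerivAt.congr_of_eventuallyEq h1 (Filter.Eventually.of_forall fun s => ?_)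
      show T s (T t (x : H)) = T (s + t) (x : H)
      rw [hTadd]; rfl
    have hmem : T t (x : H) ∈ A.domain := (hdom _).mp ⟨_, h2⟩
    exact ⟨hmem, (hgen ⟨T t (x : H), hmem⟩).unique h2⟩
  constructor
  · -- Part (1)
    intro D hD x
    have hFg0 : HasDerivAt (fun s => (T s ∘L Y ∘L T (-s)) (T 0 (x : H))) (D (x : H)) 0 := by
      rw [hT0]
      simpa using hD (x : H)
    have hFv : Filter.Tendsto (fun s => (T s ∘L Y ∘L T (-s)) (Complex.I • A x)) (𝓝 0)
        (𝓝 ((T 0 ∘L Y ∘L T (-0)) (Complex.I • A x))) := (hD _).continuousAt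
    have hprod := auxProd (fun s => T s ∘L Y ∘L T (-s)) ‖Y‖ hFbound
      (fun s => T s (x : H)) (Complex.I • A x) (D (x : H)) (hgen x) hFg0 hFv
    have h5 : HasDerivAt (fun s => T s (Y (x : H)))
        (D (x : H) + Y (Complex.I • A x)) 0 := by
      have h6 := hprod.congr_of_eventuallyEq (Filter.Eventually.of_forall fun s => by
        show T s (Y (x : H)) = T s (Y (T (-s) (T s (x : H))))
        rw [hcancel'])
      simpa [hT0] using h6
    have hmem : Y (x : H) ∈ A.domain := (hdom _).mp ⟨_, h5⟩
    refine ⟨hmem, ?_⟩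
    have h7 := (hgen ⟨Y (x : H), hmem⟩).unique h5
    rw [smul_sub, h7, map_smul]
    abel
  · -- Part (2)
    intro hY D hD x t
    -- derivative at 0 for x in the domain
    have stepA : ∀ z : A.domain,
        HasDerivAt (fun s => (T s ∘L Y ∘L T (-s)) (z : H)) (D (z : H)) 0 := by
      intro z
      have hu : HasDerivAt (fun s : ℝ => Y (T (-s) (z : H))) (-(Complex.I • Y (A z))) 0 := by
        have hk : HasDerivAt (fun r : ℝ => Y (T r (z : H))) (Complex.I • Y (A z))
            ((0 : ℝ) - 0) := by
          rw [sub_self]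
          have := (Y.restrictScalars ℝ).hasFDerivAt.comp_hasDerivAt 0 (hgen z)
          simpa [Function.comp_def] using this
        have h1 := hk.comp_const_sub (a := 0) (x := 0)
        refine HasDerivAt.congr_of_eventuallyEq h1 (Filter.Eventually.of_forall fun s => ?_)
        simp only [zero_sub]
      have hTbound : ∀ (s : ℝ) (w : H), ‖T s w‖ ≤ 1 * ‖w‖ := fun s w => by
        rw [one_mul, hnorm]
      have hFg0 : HasDerivAt (fun s => T s (Y (T (-(0 : ℝ)) (z : H))))
          (Complex.I • A ⟨Y (z : H), hY z⟩) 0 := by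
        have : Y (T (-(0 : ℝ)) (z : H)) = Y (z : H) := by rw [neg_zero, hT0]; rfl
        rw [this]
        exact hgen ⟨Y (z : H), hY z⟩
      have hcont : Filter.Tendsto (fun s => T s (-(Complex.I • Y (A z)))) (𝓝 0)
          (𝓝 (T 0 (-(Complex.I • Y (A z))))) := (hTcont _).continuousAt
      have hprod := auxProd T 1 hTbound (fun s : ℝ => Y (T (-s) (z : H))) _ _ hu hFg0 hcont
      have h4 : HasDerivAt (fun s => (T s ∘L Y ∘L T (-s)) (z : H))
          (Complex.I • A ⟨Y (z : H), hY z⟩ + T 0 (-(Complex.I • Y (A z)))) 0 := hprod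
      rw [hD z]
      have hval : Complex.I • A ⟨Y (z : H), hY z⟩ + T 0 (-(Complex.I • Y (A z)))
          = Complex.I • (A ⟨Y (z : H), hY z⟩ - Y (A z)) := by
        rw [hT0, smul_sub]
        show Complex.I • A ⟨Y (z : H), hY z⟩ + -(Complex.I • Y (A z)) = _
        abel
      rwa [hval] at h4
    -- derivative at any t for z in the domain
    have stepB : ∀ (z : A.domain) (t : ℝ),
        HasDerivAt (fun s => (T s ∘L Y ∘L T (-s)) (z : H)) ((T t ∘L D ∘L T (-t)) (z : H)) t := by
      intro z t
      obtain ⟨hmem, -⟩ := hinv z (-t)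
      have hA0 : HasDerivAt (fun h => T t ((T h ∘L Y ∘L T (-h)) (T (-t) (z : H))))
          (T t (D (T (-t) (z : H)))) (t - t) := by
        rw [sub_self]
        exact (((T t).restrictScalars ℝ).hasFDerivAt.comp_hasDerivAt 0 (stepA ⟨T (-t) (z : H), hmem⟩) : )
      have h2 := hA0.comp_sub_const (x := t) (a := t)
      have h3 : HasDerivAt (fun s => (T s ∘L Y ∘L T (-s)) (z : H))
          (T t (D (T (-t) (z : H)))) t := by
        refine HasDerivAt.congr_of_eventuallyEq h2 (Filter.Eventually.of_forall fun s => ?_)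
        show (T s ∘L Y ∘L T (-s)) (z : H)
            = T t ((T (s - t) ∘L Y ∘L T (-(s - t))) (T (-t) (z : H)))
        have e1 : T (-(s - t)) (T (-t) (z : H)) = T (-s) (z : H) := by
          rw [← ContinuousLinearMap.comp_apply, ← hTadd]
          congr 2
          ring
        have e2 : ∀ w : H, T t (T (s - t) w) = T s w := fun w => by
          rw [← ContinuousLinearMap.comp_apply, ← hTadd]
          congr 2
          ring
        show T s (Y (T (-s) (z : H))) = T t (T (s - t) (Y (T (-(s - t)) (T (-t) (z : H)))))
        rw [e1, e2]
      simpa using h3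
    -- general x by density
    have hdense : Dense (A.domain : Set H) := hA.dense_domain
    obtain ⟨u, hu_mem, hu_lim⟩ := mem_closure_iff_seq_limit.mp (hdense x)
    have hDb : ∀ (s : ℝ) (z : H), ‖(T s ∘L D ∘L T (-s)) z‖ ≤ ‖D‖ * ‖z‖ := fun s z => by
      show ‖T s (D (T (-s) z))‖ ≤ ‖D‖ * ‖z‖
      rw [hnorm]
      calc ‖D (T (-s) z)‖ ≤ ‖D‖ * ‖T (-s) z‖ := D.le_opNorm _
        _ = ‖D‖ * ‖z‖ := by rw [hnorm]
    have hf' : TendstoUniformly (fun n s => (T s ∘L D ∘L T (-s)) (u n))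
        (fun s => (T s ∘L D ∘L T (-s)) x) atTop := by
      rw [Metric.tendstoUniformly_iff]
      intro ε hε
      have hlim : Filter.Tendsto (fun n => ‖D‖ * ‖x - u n‖) atTop (𝓝 (‖D‖ * 0)) := by
        refine Filter.Tendsto.const_mul _ ?_
        have h0 : Filter.Tendsto (fun n => u n - x) atTop (𝓝 0) := by
          simpa using hu_lim.sub (tendsto_const_nhds (x := x))
        have := h0.norm
        simp only [norm_zero] at this
        refine this.congr fun n => ?_
        rw [norm_sub_rev]
      rw [mul_zero] at hlim
      filter_upwards [hlim.eventually_lt_const hε] with n hn s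
      rw [dist_eq_norm, ← map_sub]
      exact lt_of_le_of_lt (hDb s _) hn
    exact hasDerivAt_of_tendstoUniformly hf'
      (Filter.Eventually.of_forall fun n s => stepB ⟨u n, hu_mem n⟩ s)
      (fun s => ((T s ∘L Y ∘L T (-s)).continuous.tendsto x).comp hu_lim) t
end
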